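/- If G is a finite p-group and N ◁ G with G/N of exponent p, then G⁻ ⊆ N. -/
import Mathlib


/-- A subgroup is maximal cyclic if it is cyclic and not properly contained
in any cyclic subgroup. -/
def IsMaximalCyclic {G : Type*} [Group G] (C : Subgroup G) : Prop :=
  IsCyclic C ∧ ∀ D : Subgroup G, IsCyclic D → C ≤ D → C = D

/-- η(G): the number of conjugacy classes of maximal cyclic subgroups of `G`. -/
noncomputable def eta (G : Type*) [Group G] : ℕ :=
  Nat.card (Quot (fun C D : {C : Subgroup G // IsMaximalCyclic C} =>
    ∃ g : G, D.1 = C.1.map (MulAut.conj g).toMonoidHom))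

/-- The set of elements generating a non-maximal cyclic subgroup. -/
def Gminus (G : Type*) [Group G] : Set G :=
  {g : G | ¬ IsMaximalCyclic (Subgroup.zpowers g)}

/-- `C` is a maximal cyclic subgroup of `N` (all inside an ambient group). -/
def IsMaximalCyclicIn {G : Type*} [Group G] (N C : Subgroup G) : Prop :=
  C ≤ N ∧ IsCyclic C ∧ ∀ D : Subgroup G, D ≤ N → IsCyclic D → C ≤ D → C = D

lemma zpowers_isCyclic' {G : Type*} [Group G] (g : G) : IsCyclic (Subgroup.zpowers g) := by
  refine ⟨⟨⟨g, Subgroup.mem_zpowers g⟩, fun x => ?_⟩⟩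
  obtain ⟨k, hk⟩ := x.2
  exact ⟨k, Subtype.ext (by simpa using hk)⟩

theorem stmt_15 {G : Type*} [Group G] [Finite G] {p : ℕ} (hp : p.Prime)
    (hG : IsPGroup p G) (N : Subgroup G) [N.Normal]
    (hexp : ∀ x : G ⧸ N, x ^ p = 1) :
    Gminus G ⊆ (N : Set G) := by
  intro g hg
  by_contra hgN
  apply hg
  refine ⟨zpowers_isCyclic' g, fun D hD hle => ?_⟩
  obtain ⟨⟨h, hhD⟩, hgen⟩ := hD.exists_generator
  -- g ∈ D, so g = h ^ k for some integer k
  have hgD : g ∈ D := hle (Subgroup.mem_zpowers g)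
  obtain ⟨k, hk⟩ := hgen ⟨g, hgD⟩
  have hk' : h ^ k = g := congrArg Subtype.val hk
  by_cases hpk : (p : ℤ) ∣ k
  · -- then g ∈ N, contradiction
    exfalso
    obtain ⟨m, rfl⟩ := hpk
    have : g = (h ^ m) ^ p := by
      rw [← hk', ← zpow_natCast (h ^ m) p, ← zpow_mul, mul_comm]
    apply hgN
    have := hexp ((QuotientGroup.mk (h ^ m) : G ⧸ N))
    rw [← QuotientGroup.mk_pow] at this
    exact (QuotientGroup.eq_one_iff g).mp (by rw [‹g = (h ^ m) ^ p›]; exact this)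
  · -- k is coprime to orderOf h, so zpowers g = D
    obtain ⟨n, hn⟩ := hG h
    have hco : IsCoprime (orderOf h : ℤ) k := by
      have h1 : IsCoprime ((p : ℤ) ^ n) k :=
        (((Nat.prime_iff_prime_int.mp hp).coprime_iff_not_dvd).mpr hpk).pow_left
      exact h1.of_isCoprime_of_dvd_left
        (by exact_mod_cast (Int.natCast_dvd_natCast.mpr (orderOf_dvd_of_pow_eq_one hn)))
    obtain ⟨a, b, hab⟩ := hco
    have hord : h ^ ((orderOf h : ℤ)) = 1 := by
      rw [zpow_natCast]; exact pow_orderOf_eq_one h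
    have hh : h ∈ Subgroup.zpowers g := by
      refine ⟨b, ?_⟩
      calc g ^ b = h ^ (k * b) := by rw [← hk', ← zpow_mul]
        _ = h ^ (k * b) * (h ^ ((orderOf h : ℤ))) ^ a := by
              rw [hord, one_zpow, mul_one]
        _ = h ^ (k * b + (orderOf h : ℤ) * a) := by rw [← zpow_mul, ← zpow_add]
        _ = h ^ (1 : ℤ) := by
              rw [show k * b + (orderOf h : ℤ) * a = a * (orderOf h : ℤ) + b * k by ring, hab]
        _ = h := zpow_one h
    refine le_antisymm hle fun d hd => ?_
    obtain ⟨j, hj⟩ := hgen ⟨d, hd⟩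
    have : h ^ j = d := congrArg Subtype.val hj
    rw [← this]
    exact Subgroup.zpow_mem _ hh j
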